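/- Let k ≥ 2, let N, R be positive integers, and let 0 < γ < 1/4^{k−1}. Let φ : {−1,1}^R → ℝ be given by φ(1^R) = 1/2, φ((−1)^R) = −1/2, and φ(z) = 0 otherwise. Let ψ : {−1,1}^N → ℝ satisfy: ‖ψ‖₁ = 1; Σ_x ψ(x) = 0; Σ_{x ∈ D₊} |ψ(x)| ≤ 1/(48N) where D₊ = {x : ψ(x) > 0 and |x| ≥ k}; and Σ_{x ∈ D₋} |ψ(x)| ≤ 1/2 − 2/4^k where D₋ = {x : ψ(x) < 0 and |x| < k}. Then 2 · Σ_{x ∈ {−1,1}^{NR} ∖ D} |(φ★ψ)(x)| ≤ R/(24N) + e^{−2R(1/4^{k−1} − γ)²}, where D is the domain of GapOR_R^γ ∘ THR_N^k. -/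

import Mathlib

open Finset
open scoped Classical

/-- Hamming weight: the number of coordinates equal to −1 (encoded by `true`). -/
def wt {n : ℕ} (x : Fin n → Bool) : ℕ := (Finset.univ.filter (fun i => x i = true)).card

/-- `THR_N^k(x) = −1` (i.e. `true`) iff `|x| ≥ k`. -/
def THR (N k : ℕ) (x : Fin N → Bool) : Bool := decide (k ≤ wt x)

/-- The dual polynomial `φ` for GapOR: `φ(1^R) = 1/2`, `φ((−1)^R) = −1/2`, `φ(z) = 0` else. -/
noncomputable def phi0 (R : ℕ) : (Fin R → Bool) → ℝ := fun z =>
  if z = fun _ => false then 1 / 2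
  else if z = fun _ => true then -(1 / 2)
  else 0

/-- The dual block composition `(φ★ψ)(x) = 2^R · φ(sgn(ψ(x₁)),…,sgn(ψ(x_R))) · ∏ᵢ |ψ(xᵢ)|`. -/
noncomputable def dbc {N R : ℕ} (φ : (Fin R → Bool) → ℝ) (ψ : (Fin N → Bool) → ℝ)
    (x : Fin R → Fin N → Bool) : ℝ :=
  2 ^ R * φ (fun i => decide (ψ (x i) < 0)) * ∏ i, |ψ (x i)|

/-- The domain of `GapOR_R^γ ∘ THR_N^k`: the vector `(THR(x₁),…,THR(x_R))` is either all
`+1` (all `false`) or has at least `γR` coordinates equal to `−1` (`true`). -/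
def inDom (γ : ℝ) (N R k : ℕ) (x : Fin R → Fin N → Bool) : Prop :=
  (∀ i, THR N k (x i) = false) ∨
    γ * R ≤ ((Finset.univ.filter (fun i => THR N k (x i) = true)).card : ℝ)

lemma hoeff_bernoulli (p : ℝ) (hp0 : 0 ≤ p) (hp1 : p ≤ 1) (s : ℝ) (hs : s ≤ 0) :
    1 - p + p * Real.exp s ≤ Real.exp (p * s + s ^ 2 / 8) := by
  set c : ℝ → ℝ := fun u => 1 - p + p * Real.exp u with hc_def
  have hcpos : ∀ u, 0 < c u := by
    intro u
    have he := Real.exp_pos u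
    simp only [hc_def]
    nlinarith [mul_nonneg hp0 he.le]
  have hc : ∀ u, HasDerivAt c (p * Real.exp u) u := by
    intro u
    exact ((Real.hasDerivAt_exp u).const_mul p).const_add (1 - p)
  set f : ℝ → ℝ := fun u => p * u + u ^ 2 / 8 - Real.log (c u) with hf_def
  set f' : ℝ → ℝ := fun u => p + u / 4 - p * Real.exp u / c u with hf'_def
  have hf : ∀ u, HasDerivAt f (f' u) u := by
    intro u
    have h1 : HasDerivAt (fun u : ℝ => p * u + u ^ 2 / 8) (p + u / 4) u := by
      have := ((hasDerivAt_id u).const_mul p).add ((hasDerivAt_pow 2 u).div_const 8)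
      refine this.congr_deriv ?_
      norm_num; ring
    have h2 : HasDerivAt (fun u => Real.log (c u)) (p * Real.exp u / c u) u :=
      (hc u).log (hcpos u).ne'
    exact h1.sub h2
  set f'' : ℝ → ℝ := fun u =>
    1 / 4 - (p * Real.exp u * c u - p * Real.exp u * (p * Real.exp u)) / (c u) ^ 2 with hf''_def
  have hf' : ∀ u, HasDerivAt f' (f'' u) u := by
    intro u
    have hq : HasDerivAt (fun u => p * Real.exp u / c u)
        ((p * Real.exp u * c u - p * Real.exp u * (p * Real.exp u)) / (c u) ^ 2) u :=
      ((Real.hasDerivAt_exp u).const_mul p).div (hc u) (hcpos u).ne'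
    have hlin : HasDerivAt (fun u : ℝ => p + u / 4) (1 / 4) u := by
      simpa using ((hasDerivAt_id u).div_const 4).const_add p
    exact hlin.sub hq
  have hf''nonneg : ∀ u, 0 ≤ f'' u := by
    intro u
    have h := hcpos u
    have he := Real.exp_pos u
    have hsq : (0:ℝ) < (c u) ^ 2 := by positivity
    show 0 ≤ 1 / 4 - (p * Real.exp u * c u - p * Real.exp u * (p * Real.exp u)) / (c u) ^ 2
    rw [sub_nonneg, div_le_iff₀ hsq]
    simp only [hc_def]
    nlinarith [sq_nonneg ((1 - p) - p * Real.exp u)]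
  have hmono : Monotone f' := by
    have hdiff : Differentiable ℝ f' := fun u => (hf' u).differentiableAt
    apply monotone_of_deriv_nonneg hdiff
    intro u
    rw [(hf' u).deriv]
    exact hf''nonneg u
  have hc0 : c 0 = 1 := by simp [hc_def]
  have hf'0 : f' 0 = 0 := by
    simp [hf'_def, hc0]
  have hf'nonpos : ∀ u ≤ 0, f' u ≤ 0 := fun u hu => by
    have := hmono hu; rw [hf'0] at this; exact this
  have hanti : AntitoneOn f (Set.Iic 0) := by
    apply antitoneOn_of_deriv_nonpos (convex_Iic 0)
    · exact (fun u _ => (hf u).differentiableAt.continuousAt.continuousWithinAt)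
    · intro u hu
      exact (hf u).differentiableAt.differentiableWithinAt
    · intro u hu
      rw [(hf u).deriv]
      exact hf'nonpos u (le_of_lt (by simpa [interior_Iic] using hu))
  have hf0 : f 0 = 0 := by simp [hf_def, hc0]
  have hfs : 0 ≤ f s := by
    have := hanti (Set.mem_Iic.mpr hs) (Set.mem_Iic.mpr le_rfl) hs
    rw [hf0] at this; exact this
  have hlog : Real.log (c s) ≤ p * s + s ^ 2 / 8 := by
    simp only [hf_def] at hfs; linarith
  have := Real.exp_le_exp.mpr hlog
  rw [Real.exp_log (hcpos s)] at this
  simpa [hc_def] using this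

set_option maxHeartbeats 1000000 in
theorem stmt10 (k N R : ℕ) (hk : 2 ≤ k) (hN : 0 < N) (hR : 0 < R)
    (γ : ℝ) (hγ0 : 0 < γ) (hγ : γ < 1 / 4 ^ (k - 1))
    (ψ : (Fin N → Bool) → ℝ)
    (h1 : ∑ x : Fin N → Bool, |ψ x| = 1)
    (h0 : ∑ x : Fin N → Bool, ψ x = 0)
    (hplus : ∑ x ∈ Finset.univ.filter (fun x : Fin N → Bool => 0 < ψ x ∧ k ≤ wt x), |ψ x|
      ≤ 1 / (48 * N))
    (hminus : ∑ x ∈ Finset.univ.filter (fun x : Fin N → Bool => ψ x < 0 ∧ wt x < k), |ψ x|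
      ≤ 1 / 2 - 2 / 4 ^ k) :
    2 * ∑ x ∈ Finset.univ.filter (fun x : Fin R → Fin N → Bool => ¬ inDom γ N R k x),
        |dbc (phi0 R) ψ x| ≤
      R / (24 * N) + Real.exp (-2 * R * (1 / 4 ^ (k - 1) - γ) ^ 2) := by
  have hk1 : 1 ≤ k := le_trans one_le_two hk
  set w : (Fin N → Bool) → ℝ := fun y => 2 * |ψ y| with hw_def
  have hw0 : ∀ y, 0 ≤ w y := fun y => by positivity
  set Neg := univ.filter (fun y : Fin N → Bool => ψ y < 0) with hNeg_def
  set NotNeg := univ.filter (fun y : Fin N → Bool => ¬ ψ y < 0) with hNotNeg_def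
  -- masses
  have h1' : ∑ y ∈ Neg, |ψ y| + ∑ y ∈ NotNeg, |ψ y| = 1 := by
    rw [Finset.sum_filter_add_sum_filter_not univ (fun y => ψ y < 0) (fun y => |ψ y|), h1]
  have h0' : ∑ y ∈ Neg, ψ y + ∑ y ∈ NotNeg, ψ y = 0 := by
    rw [Finset.sum_filter_add_sum_filter_not univ (fun y => ψ y < 0) ψ, h0]
  have e3 : ∑ y ∈ NotNeg, ψ y = ∑ y ∈ NotNeg, |ψ y| := by
    refine Finset.sum_congr rfl fun y hy => ?_
    rw [hNotNeg_def, mem_filter] at hy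
    rw [abs_of_nonneg (not_lt.mp hy.2)]
  have e4 : ∑ y ∈ Neg, ψ y = - ∑ y ∈ Neg, |ψ y| := by
    rw [← Finset.sum_neg_distrib]
    refine Finset.sum_congr rfl fun y hy => ?_
    rw [hNeg_def, mem_filter] at hy
    rw [abs_of_neg hy.2]; ring
  have hNegMass : ∑ y ∈ Neg, |ψ y| = 1 / 2 := by
    rw [e3] at h0'; rw [e4] at h0'; linarith
  have hNotNegMass : ∑ y ∈ NotNeg, |ψ y| = 1 / 2 := by linarith
  have hwNeg : ∑ y ∈ Neg, w y = 1 := by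
    simp only [hw_def, ← Finset.mul_sum, hNegMass]; norm_num
  have hwNotNeg : ∑ y ∈ NotNeg, w y = 1 := by
    simp only [hw_def, ← Finset.mul_sum, hNotNegMass]; norm_num
  -- p
  set p := ∑ y ∈ Neg.filter (fun y => k ≤ wt y), w y with hp_def
  have hsplitNeg : p + ∑ y ∈ Neg.filter (fun y => ¬ k ≤ wt y), w y = 1 := by
    rw [hp_def, Finset.sum_filter_add_sum_filter_not Neg (fun y => k ≤ wt y) w, hwNeg]
  have hlo : ∑ y ∈ Neg.filter (fun y => ¬ k ≤ wt y), w y ≤ 1 - 4 / 4 ^ k := by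
    have heq : Neg.filter (fun y => ¬ k ≤ wt y)
        = univ.filter (fun y : Fin N → Bool => ψ y < 0 ∧ wt y < k) := by
      rw [hNeg_def, Finset.filter_filter]
      refine Finset.filter_congr fun y _ => ?_
      simp only [Nat.not_le]
    rw [heq]
    have : ∑ y ∈ univ.filter (fun y : Fin N → Bool => ψ y < 0 ∧ wt y < k), w y
        = 2 * ∑ y ∈ univ.filter (fun y : Fin N → Bool => ψ y < 0 ∧ wt y < k), |ψ y| := by
      simp only [hw_def, ← Finset.mul_sum]
    rw [this, show (1:ℝ) - 4/4^k = 2*(1/2 - 2/4^k) by ring]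
    exact mul_le_mul_of_nonneg_left hminus (by norm_num)
  have hplow : 1 / 4 ^ (k - 1) ≤ p := by
    have h4 : (4:ℝ) / 4 ^ k = 1 / 4 ^ (k - 1) := by
      rw [div_eq_div_iff (by positivity) (by positivity)]
      have : (4:ℝ) ^ k = 4 ^ (k - 1) * 4 := by
        rw [← pow_succ, Nat.sub_add_cancel hk1]
      rw [this]; ring
    rw [← h4]; linarith
  have hp1 : p ≤ 1 := by
    have : 0 ≤ ∑ y ∈ Neg.filter (fun y => ¬ k ≤ wt y), w y :=
      Finset.sum_nonneg fun y _ => hw0 y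
    linarith
  have hγp : γ < p := lt_of_lt_of_le hγ hplow
  -- a
  set a := ∑ y ∈ NotNeg.filter (fun y => k ≤ wt y), w y with ha_def
  have hasplit : a + ∑ y ∈ NotNeg.filter (fun y => ¬ k ≤ wt y), w y = 1 := by
    rw [ha_def, Finset.sum_filter_add_sum_filter_not NotNeg (fun y => k ≤ wt y) w, hwNotNeg]
  have ha0 : 0 ≤ a := Finset.sum_nonneg fun y _ => hw0 y
  have ha1 : a ≤ 1 := by
    have : 0 ≤ ∑ y ∈ NotNeg.filter (fun y => ¬ k ≤ wt y), w y :=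
      Finset.sum_nonneg fun y _ => hw0 y
    linarith
  have haN : a ≤ 1 / (24 * N) := by
    have heq : NotNeg.filter (fun y => k ≤ wt y)
        = univ.filter (fun y : Fin N → Bool => ¬ ψ y < 0 ∧ k ≤ wt y) := by
      rw [hNotNeg_def, Finset.filter_filter]
    have hsub : univ.filter (fun y : Fin N → Bool => 0 < ψ y ∧ k ≤ wt y)
        ⊆ univ.filter (fun y : Fin N → Bool => ¬ ψ y < 0 ∧ k ≤ wt y) := by
      intro y hy
      simp only [mem_filter, mem_univ, true_and] at hy ⊢
      exact ⟨not_lt.mpr hy.1.le, hy.2⟩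
    have hzero : ∀ y ∈ univ.filter (fun y : Fin N → Bool => ¬ ψ y < 0 ∧ k ≤ wt y),
        y ∉ univ.filter (fun y : Fin N → Bool => 0 < ψ y ∧ k ≤ wt y) → |ψ y| = 0 := by
      intro y hy hny
      simp only [mem_filter, mem_univ, true_and] at hy hny
      have hy0 : ψ y = 0 := by
        by_contra h
        rcases lt_or_gt_of_ne h with hlt | hgt
        · exact hy.1 hlt
        · exact hny ⟨hgt, hy.2⟩
      simp [hy0]
    have habs : ∑ y ∈ univ.filter (fun y : Fin N → Bool => ¬ ψ y < 0 ∧ k ≤ wt y), |ψ y|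
        ≤ 1 / (48 * N) := by
      rw [← Finset.sum_subset hsub hzero]; exact hplus
    have : a = 2 * ∑ y ∈ univ.filter (fun y : Fin N → Bool => ¬ ψ y < 0 ∧ k ≤ wt y), |ψ y| := by
      rw [ha_def, heq]; simp only [hw_def, ← Finset.mul_sum]
    rw [this]
    have hNpos : (0:ℝ) < N := by exact_mod_cast hN
    rw [show (1:ℝ)/(24*N) = 2 * (1/(48*N)) by field_simp; ring]
    linarith
  -- product facts
  have hprodnn : ∀ x : Fin R → Fin N → Bool, (0:ℝ) ≤ ∏ i, w (x i) :=
    fun x => Finset.prod_nonneg fun i _ => hw0 _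
  have hprodw : ∀ x : Fin R → Fin N → Bool, ∏ i, w (x i) = 2 ^ R * ∏ i, |ψ (x i)| := by
    intro x
    simp [hw_def, Finset.prod_mul_distrib]
  have i0 : Fin R := ⟨0, hR⟩
  have habs : ∀ x : Fin R → Fin N → Bool, |dbc (phi0 R) ψ x| =
      (if ∀ i, ¬ ψ (x i) < 0 then (∏ i, w (x i)) / 2 else 0)
    + (if ∀ i, ψ (x i) < 0 then (∏ i, w (x i)) / 2 else 0) := by
    intro x
    have hpr : (0:ℝ) ≤ ∏ i, |ψ (x i)| := Finset.prod_nonneg fun i _ => abs_nonneg _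
    by_cases hall1 : ∀ i, ¬ ψ (x i) < 0
    · have hz : (fun i => decide (ψ (x i) < 0)) = fun _ : Fin R => false := by
        funext i; simp [hall1 i]
      have hne : ¬ ∀ i, ψ (x i) < 0 := fun h => hall1 i0 (h i0)
      rw [if_pos hall1, if_neg hne]
      have hphi : phi0 R (fun _ : Fin R => false) = 1/2 := by simp [phi0]
      rw [dbc, hz, hphi, hprodw x]
      rw [abs_of_nonneg (mul_nonneg (by positivity) hpr)]
      ring
    · by_cases hall2 : ∀ i, ψ (x i) < 0
      · have hz : (fun i => decide (ψ (x i) < 0)) = fun _ : Fin R => true := by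
          funext i; simp [hall2 i]
        have hne : (fun _ : Fin R => true) ≠ (fun _ : Fin R => false) := by
          intro h; simpa using congrFun h i0
        have hphi : phi0 R (fun _ : Fin R => true) = -(1/2) := by
          rw [phi0]; rw [if_neg hne, if_pos rfl]
        rw [if_neg hall1, if_pos hall2]
        rw [dbc, hz, hphi, hprodw x]
        rw [show (2:ℝ)^R * (-(1/2)) * ∏ i, |ψ (x i)| = -((2^R * ∏ i, |ψ (x i)|)/2) by ring,
          abs_neg, abs_of_nonneg (by positivity)]
        ring
      · rw [if_neg hall1, if_neg hall2]
        push_neg at hall1 hall2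
        obtain ⟨i1, hi1⟩ := hall1
        obtain ⟨i2, hi2⟩ := hall2
        have hz1 : (fun i => decide (ψ (x i) < 0)) ≠ fun _ : Fin R => false := by
          intro h; have := congrFun h i1; simp [hi1] at this
        have hz2 : (fun i => decide (ψ (x i) < 0)) ≠ fun _ : Fin R => true := by
          intro h; have := congrFun h i2; simp at this; linarith
        have hphi : phi0 R (fun i => decide (ψ (x i) < 0)) = 0 := by
          rw [phi0]; rw [if_neg hz1, if_neg hz2]
        rw [dbc, hphi]
        simp
  set Bad := univ.filter (fun x : Fin R → Fin N → Bool => ¬ inDom γ N R k x) with hBad_def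
  have hdecomp : 2 * ∑ x ∈ Bad, |dbc (phi0 R) ψ x|
      = ∑ x ∈ Bad.filter (fun x => ∀ i, ¬ ψ (x i) < 0), ∏ i, w (x i)
      + ∑ x ∈ Bad.filter (fun x => ∀ i, ψ (x i) < 0), ∏ i, w (x i) := by
    calc 2 * ∑ x ∈ Bad, |dbc (phi0 R) ψ x|
        = 2 * ((∑ x ∈ Bad.filter (fun x => ∀ i, ¬ ψ (x i) < 0), (∏ i, w (x i))/2)
             + ∑ x ∈ Bad.filter (fun x => ∀ i, ψ (x i) < 0), (∏ i, w (x i))/2) := by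
          rw [Finset.sum_congr rfl (fun x _ => habs x), Finset.sum_add_distrib,
            ← Finset.sum_filter, ← Finset.sum_filter]
      _ = _ := by rw [← Finset.sum_div, ← Finset.sum_div]; ring
  -- Term 1
  have hT1 : ∑ x ∈ Bad.filter (fun x => ∀ i, ¬ ψ (x i) < 0), ∏ i, w (x i)
      ≤ (R:ℝ) / (24 * N) := by
    set SB := NotNeg.filter (fun y => ¬ k ≤ wt y) with hSB_def
    have hBAsub : Fintype.piFinset (fun _ : Fin R => SB)
        ⊆ Fintype.piFinset (fun _ : Fin R => NotNeg) := by
      intro x hx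
      rw [Fintype.mem_piFinset] at hx ⊢
      exact fun i => Finset.filter_subset _ _ (hx i)
    have hsub : Bad.filter (fun x => ∀ i, ¬ ψ (x i) < 0)
        ⊆ Fintype.piFinset (fun _ : Fin R => NotNeg) \ Fintype.piFinset (fun _ : Fin R => SB) := by
      intro x hx
      simp only [hBad_def, Finset.mem_filter, Finset.mem_univ, true_and] at hx
      obtain ⟨hbad, hpos⟩ := hx
      rw [Finset.mem_sdiff]
      constructor
      · rw [Fintype.mem_piFinset]
        intro i; rw [hNotNeg_def, Finset.mem_filter]; exact ⟨Finset.mem_univ _, hpos i⟩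
      · rw [inDom, not_or] at hbad
        obtain ⟨hb1, _⟩ := hbad
        push_neg at hb1
        obtain ⟨i, hi⟩ := hb1
        have hki : k ≤ wt (x i) := by simpa [THR] using hi
        intro hmem
        rw [Fintype.mem_piFinset] at hmem
        have := hmem i
        rw [hSB_def, Finset.mem_filter] at this
        exact this.2 hki
    have hA' : ∑ x ∈ Fintype.piFinset (fun _ : Fin R => NotNeg), ∏ i, w (x i) = 1 := by
      rw [Finset.sum_prod_piFinset]
      simp [hwNotNeg]
    have hSBsum : ∑ y ∈ SB, w y = 1 - a := by rw [hSB_def]; linarith [hasplit]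
    have hB' : ∑ x ∈ Fintype.piFinset (fun _ : Fin R => SB), ∏ i, w (x i) = (1 - a) ^ R := by
      rw [Finset.sum_prod_piFinset]
      simp [hSBsum]
    have hbern : 1 - (R:ℝ) * a ≤ (1 - a) ^ R := by
      have := one_add_mul_le_pow (show (-2:ℝ) ≤ -a by linarith) R
      have h2 : (1 : ℝ) + (R:ℝ) * (-a) = 1 - (R:ℝ)*a := by ring
      rw [h2] at this
      rwa [← sub_eq_add_neg] at this
    calc ∑ x ∈ Bad.filter (fun x => ∀ i, ¬ ψ (x i) < 0), ∏ i, w (x i)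
        ≤ ∑ x ∈ Fintype.piFinset (fun _ : Fin R => NotNeg)
            \ Fintype.piFinset (fun _ : Fin R => SB), ∏ i, w (x i) :=
          Finset.sum_le_sum_of_subset_of_nonneg hsub (fun x _ _ => hprodnn x)
      _ = 1 - (1 - a) ^ R := by rw [Finset.sum_sdiff_eq_sub hBAsub, hA', hB']
      _ ≤ (R:ℝ) * a := by linarith
      _ ≤ (R:ℝ) * (1 / (24 * N)) :=
          mul_le_mul_of_nonneg_left haN (Nat.cast_nonneg R)
      _ = (R:ℝ) / (24 * N) := by ring
  -- Term 2
  have hp0 : 0 ≤ p := Finset.sum_nonneg fun y _ => hw0 y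
  set t := 4 * (p - γ) with ht_def
  have ht : 0 < t := by rw [ht_def]; linarith
  set ind : (Fin N → Bool) → ℝ := fun y => if k ≤ wt y then 1 else 0 with hind_def
  set bad2 := (Fintype.piFinset (fun _ : Fin R => Neg)).filter
      (fun x => ((univ.filter (fun i => THR N k (x i) = true)).card : ℝ) < γ * R) with hbad2_def
  have hT2sub : Bad.filter (fun x => ∀ i, ψ (x i) < 0) ⊆ bad2 := by
    intro x hx
    simp only [hBad_def, Finset.mem_filter, Finset.mem_univ, true_and] at hx
    obtain ⟨hbad, hneg⟩ := hx
    rw [hbad2_def, Finset.mem_filter]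
    constructor
    · rw [Fintype.mem_piFinset]
      intro i; rw [hNeg_def, Finset.mem_filter]; exact ⟨Finset.mem_univ _, hneg i⟩
    · rw [inDom, not_or] at hbad
      exact not_le.mp hbad.2
  have hcard : ∀ x : Fin R → Fin N → Bool,
      ∑ i, ind (x i) = ((univ.filter (fun i => THR N k (x i) = true)).card : ℝ) := by
    intro x
    have hfe : univ.filter (fun i => THR N k (x i) = true)
        = univ.filter (fun i : Fin R => k ≤ wt (x i)) := by
      refine Finset.filter_congr fun i _ => ?_
      simp [THR]
    rw [hfe, ← Finset.sum_boole]
  have hpoint : ∀ x ∈ bad2, ∏ i, w (x i)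
      ≤ Real.exp (t * (γ * R)) * ∏ i, (w (x i) * Real.exp (-(t * ind (x i)))) := by
    intro x hx
    rw [hbad2_def, Finset.mem_filter] at hx
    have hcx := hx.2
    have hrhs : Real.exp (t * (γ * R)) * ∏ i, (w (x i) * Real.exp (-(t * ind (x i))))
        = (∏ i, w (x i)) * Real.exp (t * (γ * R) + ∑ i, -(t * ind (x i))) := by
      rw [Finset.prod_mul_distrib, ← Real.exp_sum, Real.exp_add]
      ring
    rw [hrhs]
    have hexp1 : (1:ℝ) ≤ Real.exp (t * (γ * R) + ∑ i, -(t * ind (x i))) := by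
      apply Real.one_le_exp
      have hs : ∑ i, -(t * ind (x i)) = -(t * ∑ i, ind (x i)) := by
        rw [Finset.mul_sum, ← Finset.sum_neg_distrib]
      rw [hs, hcard x]
      nlinarith [hcx]
    exact le_mul_of_one_le_right (hprodnn x) hexp1
  have hmgf : ∑ y ∈ Neg, w y * Real.exp (-(t * ind y)) = 1 - p + p * Real.exp (-t) := by
    rw [← Finset.sum_filter_add_sum_filter_not Neg (fun y => k ≤ wt y)
      (fun y => w y * Real.exp (-(t * ind y)))]
    have hhi : ∑ y ∈ Neg.filter (fun y => k ≤ wt y), w y * Real.exp (-(t * ind y))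
        = p * Real.exp (-t) := by
      rw [hp_def, Finset.sum_mul]
      refine Finset.sum_congr rfl fun y hy => ?_
      rw [Finset.mem_filter] at hy
      rw [hind_def]
      simp only [hy.2, if_pos, mul_one]
    have hlo' : ∑ y ∈ Neg.filter (fun y => ¬ k ≤ wt y), w y * Real.exp (-(t * ind y))
        = 1 - p := by
      have he : ∀ y ∈ Neg.filter (fun y => ¬ k ≤ wt y),
          w y * Real.exp (-(t * ind y)) = w y := by
        intro y hy
        rw [Finset.mem_filter] at hy
        rw [hind_def]
        simp [hy.2]
      rw [Finset.sum_congr rfl he]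
      linarith [hsplitNeg]
    rw [hhi, hlo']
    ring
  have hbase_nonneg : (0:ℝ) ≤ 1 - p + p * Real.exp (-t) :=
    add_nonneg (by linarith) (mul_nonneg hp0 (Real.exp_pos _).le)
  have hhoeff := hoeff_bernoulli p hp0 hp1 (-t) (by linarith)
  have hT2 : ∑ x ∈ Bad.filter (fun x => ∀ i, ψ (x i) < 0), ∏ i, w (x i)
      ≤ Real.exp (-2 * R * (1 / 4 ^ (k - 1) - γ) ^ 2) := by
    calc ∑ x ∈ Bad.filter (fun x => ∀ i, ψ (x i) < 0), ∏ i, w (x i)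
        ≤ ∑ x ∈ bad2, ∏ i, w (x i) :=
          Finset.sum_le_sum_of_subset_of_nonneg hT2sub (fun x _ _ => hprodnn x)
      _ ≤ ∑ x ∈ bad2, Real.exp (t * (γ * R)) * ∏ i, (w (x i) * Real.exp (-(t * ind (x i)))) :=
          Finset.sum_le_sum hpoint
      _ ≤ ∑ x ∈ Fintype.piFinset (fun _ : Fin R => Neg),
            Real.exp (t * (γ * R)) * ∏ i, (w (x i) * Real.exp (-(t * ind (x i)))) := by
          apply Finset.sum_le_sum_of_subset_of_nonneg
          · rw [hbad2_def]; exact Finset.filter_subset _ _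
          · intro x _ _
            exact mul_nonneg (Real.exp_pos _).le
              (Finset.prod_nonneg fun i _ => mul_nonneg (hw0 _) (Real.exp_pos _).le)
      _ = Real.exp (t * (γ * R)) * (1 - p + p * Real.exp (-t)) ^ R := by
          rw [← Finset.mul_sum,
            Finset.sum_prod_piFinset Neg (fun (_ : Fin R) y => w y * Real.exp (-(t * ind y)))]
          simp [hmgf]
      _ ≤ Real.exp (t * (γ * R)) * Real.exp (p * (-t) + (-t) ^ 2 / 8) ^ R := by
          apply mul_le_mul_of_nonneg_left _ (Real.exp_pos _).le
          exact pow_le_pow_left₀ hbase_nonneg hhoeff R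
      _ = Real.exp (-2 * R * (p - γ) ^ 2) := by
          rw [← Real.exp_nat_mul, ← Real.exp_add]
          congr 1
          rw [ht_def]; ring
      _ ≤ Real.exp (-2 * R * (1 / 4 ^ (k - 1) - γ) ^ 2) := by
          rw [Real.exp_le_exp]
          have hsq : (1 / 4 ^ (k - 1) - γ) ^ 2 ≤ (p - γ) ^ 2 :=
            pow_le_pow_left₀ (by linarith) (by linarith) 2
          nlinarith [Nat.cast_nonneg (α := ℝ) R, hsq]
  rw [hdecomp]
  exact add_le_add hT1 hT2
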